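/- For η > 0, ρ ≥ 0, and symmetric positive semidefinite matrices H and H_ξ (a random symmetric PSD matrix with E[H_ξ] = H), the conditional second moment of the linearized stochastic SAM iterate x_{t+1} = x_t − ηH_ξ(x_t + ρH_ξ x_t) satisfies E[‖x_{t+1}‖² | x_t] = x_tᵀ((I − ηH − ηρH²)² + η(η−2ρ)(E[H_ξ²] − H²) + 2η²ρ(E[H_ξ³] − H³) + η²ρ²(E[H_ξ⁴] − H⁴))x_t. -/

import Mathlib

open scoped BigOperators
open Matrix

private lemma sam_vec_eq {d : ℕ} (η ρ : ℝ) (A : Matrix (Fin d) (Fin d) ℝ) (x : Fin d → ℝ) :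
    x - η • A.mulVec (x + ρ • A.mulVec x)
      = ((1 : Matrix (Fin d) (Fin d) ℝ) - η • A - (η * ρ) • A ^ 2).mulVec x := by
  simp [Matrix.sub_mulVec, Matrix.smul_mulVec, Matrix.mulVec_add, Matrix.mulVec_smul,
    pow_two, ← Matrix.mulVec_mulVec, smul_smul, smul_add, sub_add_eq_sub_sub]

private lemma sym_quad {d : ℕ} (B : Matrix (Fin d) (Fin d) ℝ) (hB : B.IsSymm) (x : Fin d → ℝ) :
    (B.mulVec x) ⬝ᵥ (B.mulVec x) = x ⬝ᵥ (B ^ 2).mulVec x := by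
  rw [pow_two, ← Matrix.mulVec_mulVec, Matrix.dotProduct_mulVec (B.mulVec x)]
  rw [← Matrix.mulVec_transpose, hB.eq, dotProduct_comm, Matrix.dotProduct_mulVec]

private lemma sq_expand {d : ℕ} (η ρ : ℝ) (A : Matrix (Fin d) (Fin d) ℝ) :
    ((1 : Matrix (Fin d) (Fin d) ℝ) - η • A - (η * ρ) • A ^ 2) ^ 2
      = 1 - (2 * η) • A + (η ^ 2 - 2 * (η * ρ)) • A ^ 2
        + (2 * (η ^ 2 * ρ)) • A ^ 3 + (η ^ 2 * ρ ^ 2) • A ^ 4 := by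
  have h4 : (A ^ 2) ^ 2 = A ^ 4 := by rw [← pow_mul]
  have h3 : A * A ^ 2 = A ^ 3 := by rw [← pow_succ']
  have h3' : A ^ 2 * A = A ^ 3 := by rw [← pow_succ]
  simp only [pow_two, sub_mul, mul_sub, smul_mul_assoc, mul_smul_comm, one_mul, mul_one,
    smul_smul, smul_sub, sub_smul]
  simp only [← pow_two, h4, h3, h3']
  module

/-- One-step conditional second-moment identity for linearized stochastic SAM:
with `H_ξ` a uniformly distributed random symmetric PSD matrix (over `m` outcomes)
with mean `H`, and update `x_{t+1} = x_t − ηH_ξ(x_t + ρH_ξ x_t)`,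
`E[‖x_{t+1}‖² | x_t] = x_tᵀ((I − ηH − ηρH²)² + η(η−2ρ)(E[H_ξ²] − H²)
  + 2η²ρ(E[H_ξ³] − H³) + η²ρ²(E[H_ξ⁴] − H⁴))x_t`. -/
theorem linearized_sam_second_moment
    {d m : ℕ} (hm : 0 < m) (η ρ : ℝ) (hη : 0 < η) (hρ : 0 ≤ ρ)
    (Hs : Fin m → Matrix (Fin d) (Fin d) ℝ)
    (hsym : ∀ j, (Hs j).IsSymm) (hpsd : ∀ j, (Hs j).PosSemidef)
    (H : Matrix (Fin d) (Fin d) ℝ)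
    (hmean : H = (m : ℝ)⁻¹ • ∑ j, Hs j)
    (x : Fin d → ℝ) :
    (m : ℝ)⁻¹ *
        ∑ j, (x - η • (Hs j).mulVec (x + ρ • (Hs j).mulVec x)) ⬝ᵥ
              (x - η • (Hs j).mulVec (x + ρ • (Hs j).mulVec x))
      = x ⬝ᵥ ((((1 : Matrix (Fin d) (Fin d) ℝ) - η • H - (η * ρ) • H ^ 2) ^ 2
          + (η * (η - 2 * ρ)) • ((m : ℝ)⁻¹ • ∑ j, (Hs j) ^ 2 - H ^ 2)
          + (2 * η ^ 2 * ρ) • ((m : ℝ)⁻¹ • ∑ j, (Hs j) ^ 3 - H ^ 3)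
          + (η ^ 2 * ρ ^ 2) • ((m : ℝ)⁻¹ • ∑ j, (Hs j) ^ 4 - H ^ 4)).mulVec x) := by
  have hm0 : (m : ℝ) ≠ 0 := Nat.cast_ne_zero.mpr hm.ne'
  set B : Fin m → Matrix (Fin d) (Fin d) ℝ :=
    fun j => (1 : Matrix (Fin d) (Fin d) ℝ) - η • Hs j - (η * ρ) • (Hs j) ^ 2 with hBdef
  have hBsym : ∀ j, (B j).IsSymm := by
    intro j
    simp only [hBdef, Matrix.IsSymm, Matrix.transpose_sub, Matrix.transpose_smul,
      Matrix.transpose_one, (hsym j).eq, ((hsym j).pow 2).eq]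
  -- Rewrite LHS summands as quadratic forms
  have hsummand : ∀ j,
      (x - η • (Hs j).mulVec (x + ρ • (Hs j).mulVec x)) ⬝ᵥ
        (x - η • (Hs j).mulVec (x + ρ • (Hs j).mulVec x))
      = x ⬝ᵥ ((B j) ^ 2).mulVec x := by
    intro j
    rw [sam_vec_eq η ρ (Hs j) x, sym_quad (B j) (hBsym j) x]
  -- matrix-level identity
  have hmat : (m : ℝ)⁻¹ • ∑ j, (B j) ^ 2
      = (((1 : Matrix (Fin d) (Fin d) ℝ) - η • H - (η * ρ) • H ^ 2) ^ 2
          + (η * (η - 2 * ρ)) • ((m : ℝ)⁻¹ • ∑ j, (Hs j) ^ 2 - H ^ 2)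
          + (2 * η ^ 2 * ρ) • ((m : ℝ)⁻¹ • ∑ j, (Hs j) ^ 3 - H ^ 3)
          + (η ^ 2 * ρ ^ 2) • ((m : ℝ)⁻¹ • ∑ j, (Hs j) ^ 4 - H ^ 4)) := by
    have hsum : ∑ j, (B j) ^ 2
        = ∑ j, ((1 : Matrix (Fin d) (Fin d) ℝ) - (2 * η) • Hs j
            + (η ^ 2 - 2 * (η * ρ)) • (Hs j) ^ 2
            + (2 * (η ^ 2 * ρ)) • (Hs j) ^ 3 + (η ^ 2 * ρ ^ 2) • (Hs j) ^ 4) :=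
      Finset.sum_congr rfl fun j _ => sq_expand η ρ (Hs j)
    rw [hsum]
    have hones : ((m : ℝ)⁻¹ • (∑ _j : Fin m, (1 : Matrix (Fin d) (Fin d) ℝ)) :
        Matrix (Fin d) (Fin d) ℝ) = 1 := by
      rw [Finset.sum_const, Finset.card_univ, Fintype.card_fin, ← Nat.cast_smul_eq_nsmul ℝ,
        smul_smul, inv_mul_cancel₀ hm0, one_smul]
    rw [sq_expand η ρ H]
    simp only [Finset.sum_add_distrib, Finset.sum_sub_distrib, ← Finset.smul_sum,
      smul_add, smul_sub]
    rw [hones, hmean]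
    module
  rw [Finset.sum_congr rfl fun j _ => hsummand j, ← hmat]
  have h : ((∑ j, (B j) ^ 2).mulVec x) = ∑ j, ((B j) ^ 2).mulVec x := by
    ext i
    simp [Matrix.mulVec, dotProduct, Matrix.sum_apply, Finset.sum_mul]
    rw [Finset.sum_comm]
  rw [Matrix.smul_mulVec, dotProduct_smul, h, smul_eq_mul]
  congr 1
  simp [dotProduct, Finset.sum_apply, Finset.mul_sum]
  rw [Finset.sum_comm]
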